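/- arXiv:1004.4908 — 3 statements merged into one kernel-verified Lean document; each statement's English description precedes it below -/
import Mathlib

section
/- Let Y be a real random variable with E[exp(γY²)] < ∞ for some γ > 0, and (Yᵢ) independent copies of Y. Then for every natural number k, sup_{n≥2} E[((2 ln n)^{-1/2} max{Y₁,…,Yₙ})₊]^k < ∞, where x₊ denotes the positive part. -/
open MeasureTheory Filter

lemma aux_pow_le_exp_mul_factorial {x : ℝ} (hx : 0 ≤ x) (k : ℕ) :
    x ^ k ≤ k.factorial * Real.exp x := by
  have h1 : x ^ k / k.factorial ≤ ∑ i ∈ Finset.range (k + 1), x ^ i / i.factorial := by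
    refine Finset.single_le_sum (f := fun i => x ^ i / (i.factorial : ℝ)) ?_ ?_
    · intro i _
      positivity
    · simp [Finset.mem_range]
  have h2 := Real.sum_le_exp_of_nonneg hx (k + 1)
  have hk : (0:ℝ) < k.factorial := by positivity
  calc x ^ k = (x ^ k / k.factorial) * k.factorial := by field_simp
    _ ≤ Real.exp x * k.factorial := by
        apply mul_le_mul_of_nonneg_right (h1.trans h2) hk.le
    _ = k.factorial * Real.exp x := by ring

set_option maxHeartbeats 1000000 in
theorem sup_moment_max_of_iid_exp_square
    {Ω : Type*} [MeasurableSpace Ω] {μ : Measure Ω} [IsProbabilityMeasure μ]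
    (γ : ℝ) (hγ : 0 < γ)
    (Y : ℕ → Ω → ℝ) (hmeas : ∀ i, Measurable (Y i))
    (hindep : ProbabilityTheory.iIndepFun Y μ)
    (hident : ∀ i, Measure.map (Y i) μ = Measure.map (Y 0) μ)
    (hexp : Integrable (fun ω => Real.exp (γ * (Y 0 ω) ^ 2)) μ)
    (k : ℕ) :
    ∃ M : ℝ, ∀ (n : ℕ) (hn : 2 ≤ n),
      (∫ ω, (max ((Real.sqrt (2 * Real.log n))⁻¹ *
          (Finset.range n).sup' (Finset.nonempty_range_iff.mpr (by omega))
            (fun i => Y i ω)) 0) ^ k ∂μ) ≤ M := by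
  -- Notation
  set I : ℝ := ∫ ω, Real.exp (γ * (Y 0 ω) ^ 2) ∂μ with hI
  set C : ℝ := 1 + k.factorial * (2 / γ) ^ k with hC
  set a : ℝ := Real.sqrt (2 / γ) with ha
  have ha0 : 0 ≤ a := Real.sqrt_nonneg _
  have ha2 : a ^ 2 = 2 / γ := Real.sq_sqrt (by positivity)
  have hC0 : 0 ≤ C := by positivity
  have hI0 : 0 ≤ I := by
    apply integral_nonneg
    intro ω; positivity
  -- key pointwise bound : (max y 0)^k ≤ C * exp(γ/2 * y^2)
  have keyA : ∀ y : ℝ, (max y 0) ^ k ≤ C * Real.exp (γ / 2 * y ^ 2) := by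
    intro y
    have hm0 : 0 ≤ max y 0 := le_max_right _ _
    have hcase : (max y 0) ^ k ≤ 1 + (max y 0) ^ (2 * k) := by
      rcases le_or_gt (max y 0) 1 with h | h
      · have : (max y 0) ^ k ≤ 1 := pow_le_one₀ hm0 h
        nlinarith [pow_nonneg hm0 (2 * k)]
      · have : (max y 0) ^ k ≤ (max y 0) ^ (2 * k) :=
          pow_le_pow_right₀ h.le (by omega)
        nlinarith
    have h2 : (max y 0) ^ (2 * k) ≤ (y ^ 2) ^ k := by
      have hbase : (max y 0) ^ 2 ≤ y ^ 2 := by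
        rcases le_or_gt y 0 with h | h
        · rw [max_eq_right h]
          nlinarith [sq_nonneg y]
        · rw [max_eq_left h.le]
      rw [pow_mul]
      exact pow_le_pow_left₀ (by positivity) hbase k
    have h3 : (y ^ 2) ^ k ≤ k.factorial * (2 / γ) ^ k * Real.exp (γ / 2 * y ^ 2) := by
      have := aux_pow_le_exp_mul_factorial (x := γ / 2 * y ^ 2) (by positivity) k
      calc (y ^ 2) ^ k = (2 / γ) ^ k * (γ / 2 * y ^ 2) ^ k := by
            rw [← mul_pow, show (2 / γ) * (γ / 2 * y ^ 2) = y ^ 2 by field_simp]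
        _ ≤ (2 / γ) ^ k * (k.factorial * Real.exp (γ / 2 * y ^ 2)) := by
            apply mul_le_mul_of_nonneg_left this (by positivity)
        _ = k.factorial * (2 / γ) ^ k * Real.exp (γ / 2 * y ^ 2) := by ring
    have hexp1 : (1:ℝ) ≤ Real.exp (γ / 2 * y ^ 2) := by
      rw [Real.one_le_exp_iff]; positivity
    calc (max y 0) ^ k ≤ 1 + (max y 0) ^ (2 * k) := hcase
      _ ≤ 1 + k.factorial * (2 / γ) ^ k * Real.exp (γ / 2 * y ^ 2) := by linarith [h2.trans h3]
      _ ≤ C * Real.exp (γ / 2 * y ^ 2) := by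
          rw [hC, add_mul, one_mul]
          have : (0:ℝ) ≤ k.factorial * (2 / γ) ^ k := by positivity
          nlinarith
  -- integrability / integral of exp(γ Y i ^2)
  have hint : ∀ i, Integrable (fun ω => Real.exp (γ * (Y i ω) ^ 2)) μ ∧
      ∫ ω, Real.exp (γ * (Y i ω) ^ 2) ∂μ = I := by
    intro i
    have hg : Measurable fun y : ℝ => Real.exp (γ * y ^ 2) := by measurability
    have h0 : Integrable (fun y : ℝ => Real.exp (γ * y ^ 2)) (Measure.map (Y 0) μ) := by
      rw [integrable_map_measure hg.aestronglyMeasurable (hmeas 0).aemeasurable]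
      exact hexp
    have hi : Integrable (fun y : ℝ => Real.exp (γ * y ^ 2)) (Measure.map (Y i) μ) := by
      rw [hident i]; exact h0
    constructor
    · have := (integrable_map_measure hg.aestronglyMeasurable (hmeas i).aemeasurable).mp hi
      exact this
    · have e1 : ∫ y, Real.exp (γ * y ^ 2) ∂(Measure.map (Y i) μ)
          = ∫ ω, Real.exp (γ * (Y i ω) ^ 2) ∂μ :=
        integral_map (hmeas i).aemeasurable hg.aestronglyMeasurable
      have e0 : ∫ y, Real.exp (γ * y ^ 2) ∂(Measure.map (Y 0) μ)
          = ∫ ω, Real.exp (γ * (Y 0 ω) ^ 2) ∂μ :=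
        integral_map (hmeas 0).aemeasurable hg.aestronglyMeasurable
      rw [← e1, hident i, e0, hI]
  refine ⟨a ^ k + C * I, ?_⟩
  intro n hn
  have hne0 := Finset.nonempty_range_iff.mpr (show n ≠ 0 by omega)
  have hne : (Finset.range n).Nonempty := Finset.nonempty_range_iff.mpr (by omega)
  have hn0 : (0:ℝ) < n := by positivity
  have hlogn : 1 ≤ 2 * Real.log n := by
    have h2 : Real.log 2 ≤ Real.log n := by
      apply Real.log_le_log (by norm_num)
      exact_mod_cast hn
    have := Real.log_two_gt_d9
    linarith
  set s : ℝ := Real.sqrt (2 * Real.log n) with hs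
  have hs1 : 1 ≤ s := Real.one_le_sqrt.mpr hlogn
  have hs0 : 0 < s := by linarith
  have hs2 : s ^ 2 = 2 * Real.log n := Real.sq_sqrt (by linarith)
  set c : ℝ := s⁻¹ with hc
  have hc0 : 0 < c := by positivity
  have hc1 : c ≤ 1 := by
    rw [hc]; exact inv_le_one_of_one_le₀ hs1
  -- pointwise bound
  show (∫ ω, (max ((Real.sqrt (2 * Real.log n))⁻¹ *
      (Finset.range n).sup' hne (fun i => Y i ω)) 0) ^ k ∂μ) ≤ a ^ k + C * I
  set S : Ω → ℝ := fun ω => (Finset.range n).sup' hne (fun i => Y i ω) with hS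
  set B : Ω → ℝ := fun ω => a ^ k +
      ∑ i ∈ Finset.range n, C * ((n:ℝ) ^ 2)⁻¹ * Real.exp (γ * (Y i ω) ^ 2) with hB
  have hpt : ∀ ω, (max (c * S ω) 0) ^ k ≤ B ω := by
    intro ω
    have hsum0 : (0:ℝ) ≤ ∑ i ∈ Finset.range n, C * ((n:ℝ) ^ 2)⁻¹ * Real.exp (γ * (Y i ω) ^ 2) := by
      apply Finset.sum_nonneg; intro i _; positivity
    rcases le_or_gt (c * S ω) a with h | h
    · have : max (c * S ω) 0 ≤ a := max_le h ha0
      have := pow_le_pow_left₀ (le_max_right _ _) this k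
      rw [hB]; simp only []
      linarith
    · -- c * S ω > a ≥ 0
      have hcs0 : 0 < c * S ω := lt_of_le_of_lt ha0 h
      have hS0 : 0 < S ω := by nlinarith
      obtain ⟨i, hi, hieq⟩ := Finset.exists_mem_eq_sup' hne (fun i => Y i ω)
      have hYi : Y i ω = S ω := hieq.symm
      have hYt : a * s < Y i ω := by
        rw [hYi]
        have : a < c * S ω := h
        calc a * s < (c * S ω) * s := by
              apply mul_lt_mul_of_pos_right h hs0
          _ = S ω := by rw [hc]; field_simp
      have hstep1 : (max (c * S ω) 0) ^ k ≤ (max (Y i ω) 0) ^ k := by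
        apply pow_le_pow_left₀ (le_max_right _ _)
        rw [max_eq_left hcs0.le, max_eq_left (by rw [hYi]; exact hS0.le)]
        rw [hYi]
        exact mul_le_of_le_one_left hS0.le hc1
      have hstep2 : (max (Y i ω) 0) ^ k ≤ C * ((n:ℝ) ^ 2)⁻¹ * Real.exp (γ * (Y i ω) ^ 2) := by
        have hA := keyA (Y i ω)
        have hmark : Real.exp (γ / 2 * (Y i ω) ^ 2)
            ≤ Real.exp (γ * (Y i ω) ^ 2 - γ / 2 * (a * s) ^ 2) := by
          apply Real.exp_le_exp.mpr
          have hy2 : (a * s) ^ 2 ≤ (Y i ω) ^ 2 := by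
            apply sq_le_sq'
            · nlinarith
            · exact hYt.le
          nlinarith
        have hval : γ / 2 * (a * s) ^ 2 = 2 * Real.log n := by
          rw [mul_pow, ha2, hs2]; field_simp
        have hexp2 : Real.exp (2 * Real.log n) = (n:ℝ) ^ 2 := by
          rw [show (2 : ℝ) * Real.log n = Real.log ((n:ℝ) ^ 2) by
            rw [Real.log_pow]; push_cast; ring]
          exact Real.exp_log (by positivity)
        have hexpn : Real.exp (γ * (Y i ω) ^ 2 - γ / 2 * (a * s) ^ 2)
            = ((n:ℝ) ^ 2)⁻¹ * Real.exp (γ * (Y i ω) ^ 2) := by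
          rw [hval, Real.exp_sub, hexp2, div_eq_mul_inv, mul_comm]
        calc (max (Y i ω) 0) ^ k ≤ C * Real.exp (γ / 2 * (Y i ω) ^ 2) := hA
          _ ≤ C * (((n:ℝ) ^ 2)⁻¹ * Real.exp (γ * (Y i ω) ^ 2)) := by
              rw [← hexpn]
              exact mul_le_mul_of_nonneg_left hmark hC0
          _ = C * ((n:ℝ) ^ 2)⁻¹ * Real.exp (γ * (Y i ω) ^ 2) := by ring
      have hsingle : C * ((n:ℝ) ^ 2)⁻¹ * Real.exp (γ * (Y i ω) ^ 2)
          ≤ ∑ j ∈ Finset.range n, C * ((n:ℝ) ^ 2)⁻¹ * Real.exp (γ * (Y j ω) ^ 2) := by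
        apply Finset.single_le_sum (f := fun j => C * ((n:ℝ) ^ 2)⁻¹ * Real.exp (γ * (Y j ω) ^ 2))
          (fun j _ => by positivity) hi
      have hak : (0:ℝ) ≤ a ^ k := by positivity
      rw [hB]
      calc (max (c * S ω) 0) ^ k ≤ C * ((n:ℝ) ^ 2)⁻¹ * Real.exp (γ * (Y i ω) ^ 2) :=
            hstep1.trans hstep2
        _ ≤ ∑ j ∈ Finset.range n, C * ((n:ℝ) ^ 2)⁻¹ * Real.exp (γ * (Y j ω) ^ 2) := hsingle
        _ ≤ a ^ k + ∑ j ∈ Finset.range n, C * ((n:ℝ) ^ 2)⁻¹ * Real.exp (γ * (Y j ω) ^ 2) := by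
            linarith
  -- integrability of B
  have hBint : Integrable B μ := by
    apply Integrable.add (integrable_const _)
    apply integrable_finset_sum
    intro i _
    exact ((hint i).1.const_mul _)
  -- integrate
  have hmono : (∫ ω, (max (c * S ω) 0) ^ k ∂μ) ≤ ∫ ω, B ω ∂μ := by
    apply integral_mono_of_nonneg
    · filter_upwards with ω
      positivity
    · exact hBint
    · filter_upwards with ω
      exact hpt ω
  have hBcalc : (∫ ω, B ω ∂μ) = a ^ k + (n:ℝ) * (C * ((n:ℝ) ^ 2)⁻¹ * I) := by
    rw [hB]
    rw [integral_add (integrable_const _) (integrable_finset_sum _ (fun i _ => ((hint i).1.const_mul _)))]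
    simp only [integral_const, measure_univ, ENNReal.toReal_one, probReal_univ, smul_eq_mul, one_mul]
    congr 1
    rw [integral_finset_sum _ (fun i _ => ((hint i).1.const_mul _))]
    have : ∀ i ∈ Finset.range n, (∫ ω, C * ((n:ℝ) ^ 2)⁻¹ * Real.exp (γ * (Y i ω) ^ 2) ∂μ)
        = C * ((n:ℝ) ^ 2)⁻¹ * I := by
      intro i _
      rw [integral_const_mul, (hint i).2]
    rw [Finset.sum_congr rfl this, Finset.sum_const, Finset.card_range, nsmul_eq_mul]
  have hfinal : (n:ℝ) * (C * ((n:ℝ) ^ 2)⁻¹ * I) ≤ C * I := by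
    have hnne : (n:ℝ) ≠ 0 := ne_of_gt hn0
    have h1 : (n:ℝ) * (C * ((n:ℝ) ^ 2)⁻¹ * I) = (C * I) * ((n:ℝ))⁻¹ := by
      field_simp
    rw [h1]
    have h2 : ((n:ℝ))⁻¹ ≤ 1 := by
      apply inv_le_one_of_one_le₀
      exact_mod_cast (by omega : 1 ≤ n)
    nlinarith [mul_nonneg (mul_nonneg hC0 hI0) (sub_nonneg.mpr h2)]
  calc (∫ ω, (max (c * S ω) 0) ^ k ∂μ) ≤ ∫ ω, B ω ∂μ := hmono
    _ = a ^ k + (n:ℝ) * (C * ((n:ℝ) ^ 2)⁻¹ * I) := hBcalc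
    _ ≤ a ^ k + C * I := by linarith
end

section
/- Let Y be a real random variable with E[exp(γY²)] < ∞ for some γ > 0, and (Yᵢ) independent copies. Then limsup_{n→∞} E[((2 ln n)^{-1/2} max{Y₁,…,Yₙ})₊^k] ≤ (2γ)^{-k/2} for every k ∈ ℕ. -/
open MeasureTheory Filter

lemma key_pow_le {γ t y : ℝ} (k : ℕ) (hγ : 0 < γ) (ht : 0 < t)
    (hk : (k : ℝ) ≤ 2 * γ * t ^ 2) (hy : t ≤ y) :
    y ^ k ≤ t ^ k * Real.exp (γ * (y ^ 2 - t ^ 2)) := by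
  have hy0 : 0 < y := lt_of_lt_of_le ht hy
  have hq : 1 ≤ y / t := (one_le_div ht).mpr hy
  have hq0 : 0 < y / t := by positivity
  have hln0 : 0 ≤ Real.log (y / t) := Real.log_nonneg hq
  have h1 : Real.log (y / t) ≤ y / t - 1 := Real.log_le_sub_one_of_pos hq0
  have hkey : (k : ℝ) * Real.log (y / t) ≤ γ * (y ^ 2 - t ^ 2) := by
    calc (k : ℝ) * Real.log (y / t) ≤ (2 * γ * t ^ 2) * Real.log (y / t) :=
          mul_le_mul_of_nonneg_right hk hln0
    _ ≤ (2 * γ * t ^ 2) * (y / t - 1) := by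
          apply mul_le_mul_of_nonneg_left h1 (by positivity)
    _ = 2 * γ * t * (y - t) := by field_simp
    _ ≤ γ * (y + t) * (y - t) := by nlinarith [mul_nonneg hγ.le (sq_nonneg (y - t))]
    _ = γ * (y ^ 2 - t ^ 2) := by ring
  have h2 : (y / t) ^ k ≤ Real.exp (γ * (y ^ 2 - t ^ 2)) := by
    calc (y / t) ^ k = Real.exp (Real.log (y / t)) ^ k := by rw [Real.exp_log hq0]
    _ = Real.exp ((k : ℝ) * Real.log (y / t)) := (Real.exp_nat_mul _ k).symm
    _ ≤ Real.exp (γ * (y ^ 2 - t ^ 2)) := Real.exp_le_exp.mpr hkey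
  calc y ^ k = t ^ k * (y / t) ^ k := by
        rw [div_pow, mul_div_cancel₀]; positivity
  _ ≤ t ^ k * Real.exp (γ * (y ^ 2 - t ^ 2)) :=
        mul_le_mul_of_nonneg_left h2 (by positivity)

theorem limsup_moment_normalized_max
    {Ω : Type*} [MeasurableSpace Ω] {μ : Measure Ω} [IsProbabilityMeasure μ]
    (γ : ℝ) (hγ : 0 < γ)
    (Y : ℕ → Ω → ℝ) (hmeas : ∀ i, Measurable (Y i))
    (hindep : ProbabilityTheory.iIndepFun Y μ)
    (hident : ∀ i, Measure.map (Y i) μ = Measure.map (Y 0) μ)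
    (hexp : Integrable (fun ω => Real.exp (γ * (Y 0 ω) ^ 2)) μ)
    (k : ℕ) :
    Filter.limsup (fun n : ℕ =>
        ∫ ω, (max ((Real.sqrt (2 * Real.log n))⁻¹ *
          (Finset.range (n + 1)).sup' (by simp) (fun i => Y i ω)) 0) ^ k ∂μ) atTop
      ≤ (2 * γ) ^ (-(k : ℝ) / 2) := by
  set T : ℝ := (2 * γ) ^ (-(k : ℝ) / 2) with hT
  set f : ℕ → ℝ := fun n : ℕ =>
      ∫ ω, (max ((Real.sqrt (2 * Real.log n))⁻¹ *
        (Finset.range (n + 1)).sup' (by simp) (fun i => Y i ω)) 0) ^ k ∂μ with hf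
  -- basic integrability facts
  have hfm : Measurable (fun x : ℝ => Real.exp (γ * x ^ 2)) := by measurability
  have h1 : Integrable (fun x : ℝ => Real.exp (γ * x ^ 2)) (Measure.map (Y 0) μ) :=
    (integrable_map_measure hfm.aestronglyMeasurable (hmeas 0).aemeasurable).mpr hexp
  have hInt : ∀ i, Integrable (fun ω => Real.exp (γ * (Y i ω) ^ 2)) μ := by
    intro i
    have h2 : Integrable (fun x : ℝ => Real.exp (γ * x ^ 2)) (Measure.map (Y i) μ) :=
      (hident i) ▸ h1
    exact (integrable_map_measure hfm.aestronglyMeasurable (hmeas i).aemeasurable).mp h2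
  set C : ℝ := ∫ ω, Real.exp (γ * (Y 0 ω) ^ 2) ∂μ with hC
  have hIntEq : ∀ i, ∫ ω, Real.exp (γ * (Y i ω) ^ 2) ∂μ = C := by
    intro i
    calc ∫ ω, Real.exp (γ * (Y i ω) ^ 2) ∂μ
        = ∫ x, Real.exp (γ * x ^ 2) ∂(Measure.map (Y i) μ) :=
          (integral_map (hmeas i).aemeasurable hfm.aestronglyMeasurable).symm
    _ = ∫ x, Real.exp (γ * x ^ 2) ∂(Measure.map (Y 0) μ) := by rw [hident i]
    _ = C := integral_map (hmeas 0).aemeasurable hfm.aestronglyMeasurable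
  have hfnonneg : ∀ n, 0 ≤ f n := fun n => integral_nonneg (fun ω => by positivity)
  have hcobdd : IsCoboundedUnder (· ≤ ·) atTop f :=
    isCoboundedUnder_le_of_le atTop hfnonneg
  -- main estimate for each δ > 0
  have H : ∀ δ : ℝ, 0 < δ → Filter.limsup f atTop ≤ (1 + δ) ^ ((k : ℝ) / 2) * T := by
    intro δ hδ
    have h1δ : (0:ℝ) < 1 + δ := by linarith
    set q : ℝ := Real.sqrt ((1 + δ) / (2 * γ)) with hq
    set b : ℕ → ℝ := fun n =>
      q ^ k * (1 + ((n : ℝ) ^ (-δ) + (n : ℝ) ^ (-(1 + δ))) * C) with hb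
    -- Step A : eventual bound f ≤ b
    have hlog : Tendsto (fun n : ℕ => Real.log n) atTop atTop :=
      Real.tendsto_log_atTop.comp tendsto_natCast_atTop_atTop
    have hevL : ∀ᶠ n : ℕ in atTop, max 1 ((k : ℝ) / (2 * (1 + δ))) ≤ Real.log n :=
      hlog.eventually_ge_atTop _
    have hA : ∀ᶠ n : ℕ in atTop, f n ≤ b n := by
      filter_upwards [hevL] with n hn
      set L : ℝ := Real.log n with hLdef
      have hL1 : 1 ≤ L := le_trans (le_max_left _ _) hn
      have hL0 : 0 < L := by linarith
      have hLk : (k : ℝ) ≤ 2 * (1 + δ) * L := by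
        have := le_trans (le_max_right 1 ((k : ℝ) / (2 * (1 + δ)))) hn
        rw [div_le_iff₀ (by positivity)] at this
        linarith
      have hn0 : (0:ℝ) < n := by
        rcases Nat.eq_zero_or_pos n with h | h
        · subst h
          rw [hLdef] at hL1
          norm_num [Real.log_zero] at hL1
        · exact_mod_cast h
      set t : ℝ := Real.sqrt ((1 + δ) * L / γ) with htdef
      have ht2 : t ^ 2 = (1 + δ) * L / γ := Real.sq_sqrt (by positivity)
      have ht : 0 < t := Real.sqrt_pos.mpr (by positivity)
      set a : ℝ := (Real.sqrt (2 * L))⁻¹ with hadef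
      have ha : 0 ≤ a := by positivity
      have hk2 : (k : ℝ) ≤ 2 * γ * t ^ 2 := by
        have he : 2 * γ * t ^ 2 = 2 * (1 + δ) * L := by
          rw [ht2]; field_simp
        linarith [he]
      -- pointwise bound
      set A : ℝ := a ^ k * t ^ k with hA
      set B : ℝ := a ^ k * t ^ k * Real.exp (-(γ * t ^ 2)) with hB
      have hA0 : 0 ≤ A := by rw [hA]; positivity
      have hB0 : 0 ≤ B := by rw [hB]; positivity
      have hpt : ∀ ω, (max ((Real.sqrt (2 * Real.log n))⁻¹ *
          (Finset.range (n + 1)).sup' (by simp) (fun i => Y i ω)) 0) ^ k ≤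
          A + B * ∑ i ∈ Finset.range (n + 1), Real.exp (γ * (Y i ω) ^ 2) := by
        intro ω
        set S : ℝ := (Finset.range (n + 1)).sup' (by simp) (fun i => Y i ω) with hS
        have hsum0 : 0 ≤ ∑ i ∈ Finset.range (n + 1), Real.exp (γ * (Y i ω) ^ 2) :=
          Finset.sum_nonneg fun i _ => (Real.exp_pos _).le
        have hmax : max (a * S) 0 = a * max S 0 := by
          rw [mul_max_of_nonneg _ _ ha, mul_zero]
        rw [show (Real.sqrt (2 * Real.log n))⁻¹ = a from rfl, hmax, mul_pow]
        have hM0 : 0 ≤ max S 0 := le_max_right _ _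
        have hMle : (max S 0) ^ k ≤ t ^ k + t ^ k * Real.exp (-(γ * t ^ 2)) *
            ∑ i ∈ Finset.range (n + 1), Real.exp (γ * (Y i ω) ^ 2) := by
          rcases le_or_gt (max S 0) t with hMt | hMt
          · have h' : (max S 0) ^ k ≤ t ^ k := pow_le_pow_left₀ hM0 hMt k
            have h0 : 0 ≤ t ^ k * Real.exp (-(γ * t ^ 2)) *
                ∑ i ∈ Finset.range (n + 1), Real.exp (γ * (Y i ω) ^ 2) := by positivity
            linarith
          · have hSt : t < S := by
              rcases max_cases S 0 with ⟨h1', _⟩ | ⟨h1', h2'⟩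
              · rwa [h1'] at hMt
              · rw [h1'] at hMt; exact absurd hMt (not_lt.mpr ht.le)
            have hMS : max S 0 = S := max_eq_left (le_trans ht.le hSt.le)
            obtain ⟨j, hj, hjs⟩ := Finset.exists_mem_eq_sup' (by simp :
              (Finset.range (n + 1)).Nonempty) (fun i => Y i ω)
            have hyk : S ^ k ≤ t ^ k * Real.exp (γ * (S ^ 2 - t ^ 2)) :=
              key_pow_le k hγ ht hk2 hSt.le
            have hexpS : Real.exp (γ * (S ^ 2 - t ^ 2)) =
                Real.exp (-(γ * t ^ 2)) * Real.exp (γ * S ^ 2) := by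
              rw [← Real.exp_add]; ring_nf
            have hSsum : Real.exp (γ * S ^ 2) ≤
                ∑ i ∈ Finset.range (n + 1), Real.exp (γ * (Y i ω) ^ 2) := by
              have hSj : S = Y j ω := by rw [hS, hjs]
              rw [hSj]
              exact Finset.single_le_sum (f := fun i => Real.exp (γ * (Y i ω) ^ 2))
                (fun i _ => (Real.exp_pos _).le) hj
            have htk : (0:ℝ) ≤ t ^ k := by positivity
            calc (max S 0) ^ k = S ^ k := by rw [hMS]
            _ ≤ t ^ k * Real.exp (γ * (S ^ 2 - t ^ 2)) := hyk
            _ = t ^ k * Real.exp (-(γ * t ^ 2)) * Real.exp (γ * S ^ 2) := by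
                  rw [hexpS]; ring
            _ ≤ t ^ k * Real.exp (-(γ * t ^ 2)) *
                ∑ i ∈ Finset.range (n + 1), Real.exp (γ * (Y i ω) ^ 2) := by
                  apply mul_le_mul_of_nonneg_left hSsum (by positivity)
            _ ≤ t ^ k + t ^ k * Real.exp (-(γ * t ^ 2)) *
                ∑ i ∈ Finset.range (n + 1), Real.exp (γ * (Y i ω) ^ 2) := by
                  linarith
        calc a ^ k * (max S 0) ^ k ≤ a ^ k * (t ^ k + t ^ k * Real.exp (-(γ * t ^ 2)) *
            ∑ i ∈ Finset.range (n + 1), Real.exp (γ * (Y i ω) ^ 2)) :=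
              mul_le_mul_of_nonneg_left hMle (by positivity)
        _ = A + B * ∑ i ∈ Finset.range (n + 1), Real.exp (γ * (Y i ω) ^ 2) := by
              rw [hA, hB]; ring
      -- integrate
      have hGint : Integrable (fun ω => A + B *
          ∑ i ∈ Finset.range (n + 1), Real.exp (γ * (Y i ω) ^ 2)) μ :=
        (integrable_const _).add
          ((integrable_finset_sum _ (fun i _ => hInt i)).const_mul _)
      have hfleg : f n ≤ ∫ ω, (A + B *
          ∑ i ∈ Finset.range (n + 1), Real.exp (γ * (Y i ω) ^ 2)) ∂μ :=
        integral_mono_of_nonneg (Eventually.of_forall fun ω => by positivity) hGint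
          (Eventually.of_forall hpt)
      have hsum_int : ∫ ω, (∑ i ∈ Finset.range (n + 1),
          Real.exp (γ * (Y i ω) ^ 2)) ∂μ = ((n : ℝ) + 1) * C := by
        rw [integral_finset_sum _ (fun i _ => hInt i)]
        simp only [hIntEq]
        rw [Finset.sum_const, Finset.card_range, nsmul_eq_mul]
        push_cast; ring
      have hGval : ∫ ω, (A + B *
          ∑ i ∈ Finset.range (n + 1), Real.exp (γ * (Y i ω) ^ 2)) ∂μ
          = A + B * (((n : ℝ) + 1) * C) := by
        have hBint : ∫ ω, (B * ∑ i ∈ Finset.range (n + 1),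
            Real.exp (γ * (Y i ω) ^ 2)) ∂μ = B * (((n : ℝ) + 1) * C) := by
          rw [MeasureTheory.integral_const_mul, hsum_int]
        rw [integral_add (integrable_const _)
          ((integrable_finset_sum _ (fun i _ => hInt i)).const_mul _),
          hBint, integral_const]
        simp [measure_univ]
      -- algebra: identify with b n
      have hat : a * t = q := by
        have h2L : (0:ℝ) < 2 * L := by linarith
        have ht' : t = q * Real.sqrt (2 * L) := by
          rw [htdef, hq, ← Real.sqrt_mul (by positivity)]
          congr 1
          field_simp
        rw [ht', hadef]
        rw [inv_mul_eq_div, mul_div_assoc, div_self (Real.sqrt_ne_zero'.mpr h2L), mul_one]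
      have hE : Real.exp (-(γ * t ^ 2)) = (n : ℝ) ^ (-(1 + δ)) := by
        rw [Real.rpow_def_of_pos hn0]
        congr 1
        rw [ht2]
        field_simp
        ring
      have hnn : (n : ℝ) ^ (-(1 + δ)) * (n : ℝ) = (n : ℝ) ^ (-δ) := by
        nth_rewrite 2 [← Real.rpow_one (n:ℝ)]
        rw [← Real.rpow_add hn0]
        norm_num
      have hfinal : A + B * (((n : ℝ) + 1) * C) = b n := by
        rw [hA, hB, hb, hE]
        rw [show a ^ k * t ^ k + a ^ k * t ^ k * (n : ℝ) ^ (-(1 + δ)) * (((n : ℝ) + 1) * C)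
          = (a * t) ^ k * (1 + ((n : ℝ) ^ (-(1 + δ)) * (n : ℝ) + (n : ℝ) ^ (-(1 + δ))) * C)
          from by rw [mul_pow]; ring]
        rw [hnn, hat]
      calc f n ≤ _ := hfleg
      _ = A + B * (((n : ℝ) + 1) * C) := hGval
      _ = b n := hfinal
    -- Step B : limit of b
    have hB : Tendsto b atTop (nhds (q ^ k * (1 + ((0:ℝ) + 0) * C))) := by
      apply Tendsto.const_mul
      apply Tendsto.const_add
      apply Tendsto.mul_const
      exact ((tendsto_rpow_neg_atTop hδ).comp tendsto_natCast_atTop_atTop).add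
        ((tendsto_rpow_neg_atTop (by linarith : (0:ℝ) < 1 + δ)).comp
          tendsto_natCast_atTop_atTop)
    have hBlim : Filter.limsup b atTop = q ^ k * (1 + ((0:ℝ) + 0) * C) := hB.limsup_eq
    have hls : Filter.limsup f atTop ≤ q ^ k * (1 + ((0:ℝ) + 0) * C) := by
      rw [← hBlim]
      exact limsup_le_limsup hA hcobdd hB.isBoundedUnder_le
    have hqk : q ^ k * (1 + ((0:ℝ) + 0) * C) = (1 + δ) ^ ((k : ℝ) / 2) * T := by
      have h2γ : (0:ℝ) < 2 * γ := by linarith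
      have hx : (0:ℝ) ≤ (1 + δ) / (2 * γ) := by positivity
      have : q ^ k = ((1 + δ) / (2 * γ)) ^ ((k : ℝ) / 2) := by
        rw [hq, ← Real.rpow_natCast (Real.sqrt _) k, Real.sqrt_eq_rpow,
          ← Real.rpow_mul hx]
        congr 1
        ring
      rw [this, hT, Real.div_rpow h1δ.le h2γ.le, div_eq_mul_inv,
        ← Real.rpow_neg h2γ.le, neg_div]
      norm_num
    rw [← hqk]; exact hls
  -- conclude by letting δ → 0
  by_contra hcon
  push_neg at hcon
  have hTlt : T < Filter.limsup f atTop := hcon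
  have hcont : ContinuousAt (fun δ : ℝ => (1 + δ) ^ ((k : ℝ) / 2) * T) 0 := by
    apply ContinuousAt.mul _ continuousAt_const
    apply ContinuousAt.rpow_const (by fun_prop)
    right; positivity
  have htend : Tendsto (fun δ : ℝ => (1 + δ) ^ ((k : ℝ) / 2) * T)
      (nhdsWithin 0 (Set.Ioi 0)) (nhds T) := by
    have h' : ContinuousWithinAt (fun δ : ℝ => (1 + δ) ^ ((k : ℝ) / 2) * T)
        (Set.Ioi 0) 0 := hcont.continuousWithinAt
    have h0 : (1 + (0:ℝ)) ^ ((k : ℝ) / 2) * T = T := by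
      norm_num [Real.one_rpow]
    simpa [h0] using h'.tendsto
  have hev : ∀ᶠ δ in nhdsWithin (0:ℝ) (Set.Ioi 0),
      (1 + δ) ^ ((k : ℝ) / 2) * T < Filter.limsup f atTop :=
    htend.eventually_lt_const hTlt
  obtain ⟨δ, hδlt, hδmem⟩ := (hev.and self_mem_nhdsWithin).exists
  exact absurd (H δ hδmem) (not_le.mpr hδlt)
end

section
/- For the fractional Brownian bridge X(t) = Y(t) − r(t,1)Y(1) with Y a fractional Brownian motion of Hurst index H ∈ (0,1) and r(t,s) = ½(t^{2H}+s^{2H}−|t−s|^{2H}), the variance σ²(t) = Var X(t) = t^{2H} − ¼(t^{2H}+1−(1−t)^{2H})² attains its maximum on [0,1] at t = 1/2, with maximal value 2^{-2H} − 1/4. -/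
/-- Power mean (concavity) inequality: for `0 < e ≤ 1` and `t ∈ [0,1]`,
`t ^ e + (1 - t) ^ e ≤ 2 * 2 ^ (-e)`. -/
lemma fbb_pow_mean_le {e t : ℝ} (he0 : 0 < e) (he1 : e ≤ 1) (ht0 : 0 ≤ t) (ht1 : t ≤ 1) :
    t ^ e + (1 - t) ^ e ≤ 2 * (2 : ℝ) ^ (-e) := by
  have h1t : (0 : ℝ) ≤ 1 - t := by linarith
  set X := t ^ e with hXdef
  set Y := (1 - t) ^ e with hYdef
  have hX : (0 : ℝ) ≤ X := Real.rpow_nonneg ht0 _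
  have hY : (0 : ℝ) ≤ Y := Real.rpow_nonneg h1t _
  have hinv : 1 ≤ 1 / e := by
    rw [le_div_iff₀ he0]; linarith
  have hc := (convexOn_rpow hinv).2 (Set.mem_Ici.mpr hX) (Set.mem_Ici.mpr hY)
      (by norm_num : (0:ℝ) ≤ 1/2) (by norm_num : (0:ℝ) ≤ 1/2) (by norm_num)
  simp only [smul_eq_mul] at hc
  have hXe : X ^ (1 / e) = t := by
    rw [hXdef, ← Real.rpow_mul ht0, mul_one_div, div_self he0.ne', Real.rpow_one]
  have hYe : Y ^ (1 / e) = 1 - t := by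
    rw [hYdef, ← Real.rpow_mul h1t, mul_one_div, div_self he0.ne', Real.rpow_one]
  rw [hXe, hYe] at hc
  have hc2 : (1 / 2 * X + 1 / 2 * Y) ^ (1 / e) ≤ 1 / 2 := by
    calc (1 / 2 * X + 1 / 2 * Y) ^ (1 / e) ≤ 1 / 2 * t + 1 / 2 * (1 - t) := hc
    _ = 1 / 2 := by ring
  have hbase : (0 : ℝ) ≤ 1 / 2 * X + 1 / 2 * Y := by linarith
  have hmono := Real.rpow_le_rpow (Real.rpow_nonneg hbase _) hc2 he0.le
  rw [← Real.rpow_mul hbase, one_div_mul_cancel he0.ne', Real.rpow_one] at hmono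
  have hhalf : ((1 : ℝ) / 2) ^ e = (2 : ℝ) ^ (-e) := by
    rw [one_div, Real.inv_rpow (by norm_num : (0:ℝ) ≤ 2), ← Real.rpow_neg (by norm_num : (0:ℝ) ≤ 2)]
  rw [hhalf] at hmono
  linarith

theorem fractional_brownian_bridge_variance_max
    (H : ℝ) (hH : H ∈ Set.Ioo (0 : ℝ) 1)
    (σsq : ℝ → ℝ)
    (hσ : ∀ t : ℝ, σsq t
      = t ^ (2 * H) - (1 / 4) * (t ^ (2 * H) + 1 - |1 - t| ^ (2 * H)) ^ 2) :
    IsMaxOn σsq (Set.Icc (0 : ℝ) 1) (1 / 2) ∧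
      σsq (1 / 2) = 2 ^ (-(2 * H)) - 1 / 4 := by
  obtain ⟨hH0, hH1⟩ := hH
  set a : ℝ := 2 * H with ha
  have ha0 : 0 < a := by positivity
  have ha2 : a < 2 := by simp only [ha]; linarith
  set m : ℝ := (2 : ℝ) ^ (-a) with hm
  -- value at 1/2
  have hval : σsq (1 / 2) = m - 1 / 4 := by
    rw [hσ]
    have h1 : |1 - (1 : ℝ) / 2| = 1 / 2 := by norm_num
    rw [h1]
    have hhalf : ((1 : ℝ) / 2) ^ a = m := by
      rw [hm, one_div, Real.inv_rpow (by norm_num : (0:ℝ) ≤ 2),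
        ← Real.rpow_neg (by norm_num : (0:ℝ) ≤ 2)]
    rw [hhalf]; ring
  have hm14 : (1 : ℝ) / 4 ≤ m := by
    have h4 : (2 : ℝ) ^ (-2 : ℝ) ≤ (2 : ℝ) ^ (-a) :=
      Real.rpow_le_rpow_of_exponent_le (by norm_num) (by linarith)
    have h2 : (2 : ℝ) ^ (-2 : ℝ) = 1 / 4 := by
      rw [show (-2 : ℝ) = ((-2 : ℤ) : ℝ) by norm_num, Real.rpow_intCast]
      norm_num
    rw [hm, ← h2]; exact h4
  constructor
  · intro t ht
    obtain ⟨ht0, ht1⟩ := ht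
    simp only [Set.mem_setOf_eq]
    rw [hval, hσ t]
    have h1t : (0 : ℝ) ≤ 1 - t := by linarith
    rw [abs_of_nonneg h1t]
    set u : ℝ := t ^ a with hu
    set v : ℝ := (1 - t) ^ a with hv
    -- goal : u - 1/4 * (u + 1 - v)^2 ≤ m - 1/4
    rcases le_or_gt a 1 with hcase | hcase
    · -- concave case
      have hpm : u + v ≤ 2 * m := fbb_pow_mean_le ha0 hcase ht0 ht1
      nlinarith [sq_nonneg (u - v)]
    · -- convex case: a > 1
      rcases eq_or_lt_of_le ht0 with h0 | h0
      · -- t = 0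
        have hu0 : u = 0 := by rw [hu, ← h0, Real.zero_rpow ha0.ne']
        have hv1 : v = 1 := by rw [hv, ← h0]; simp [Real.one_rpow]
        rw [hu0, hv1]; norm_num; linarith
      rcases eq_or_lt_of_le ht1 with h1 | h1
      · -- t = 1
        have hu1 : u = 1 := by rw [hu, h1, Real.one_rpow]
        have hv0 : v = 0 := by rw [hv, h1]; simp [Real.zero_rpow ha0.ne']
        rw [hu1, hv0]; norm_num; linarith
      -- 0 < t < 1
      have h1t' : (0 : ℝ) < 1 - t := by linarith
      set b : ℝ := a - 1 with hb
      have hb0 : 0 < b := by simp only [hb]; linarith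
      have hb1 : b ≤ 1 := by simp only [hb]; linarith
      set A : ℝ := t ^ b with hA
      set B : ℝ := (1 - t) ^ b with hB
      have huA : u = t * A := by
        rw [hu, hA, show a = 1 + b by rw [hb]; ring, Real.rpow_add h0, Real.rpow_one]
      have hvB : v = (1 - t) * B := by
        rw [hv, hB, show a = 1 + b by rw [hb]; ring, Real.rpow_add h1t', Real.rpow_one]
      have hAt : t ≤ A := by
        have := Real.rpow_le_rpow_of_exponent_ge h0 (le_of_lt h1) hb1
        rwa [Real.rpow_one] at this
      have hBt : 1 - t ≤ B := by
        have := Real.rpow_le_rpow_of_exponent_ge h1t' (by linarith) hb1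
        rwa [Real.rpow_one] at this
      have hAB : A + B ≤ 2 * (2 : ℝ) ^ (-b) := fbb_pow_mean_le hb0 hb1 ht0 ht1
      have hmb : 2 * (2 : ℝ) ^ (-b) = 4 * m := by
        rw [hm, show -b = 1 + -a by rw [hb]; ring, Real.rpow_add (by norm_num : (0:ℝ) < 2),
          Real.rpow_one]
        ring
      rw [hmb] at hAB
      have hABge : 1 ≤ A + B := by linarith
      have hp4 : t * (1 - t) ≤ 1 / 4 := by nlinarith [sq_nonneg (t - 1/2)]
      have hp0 : 0 ≤ t * (1 - t) := by positivity
      have key1 : (1 / 4 - t * (1 - t)) * (A + B - 1) ≥ 0 :=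
        mul_nonneg (by linarith) (by linarith)
      have key2 : (t * (1 - t)) * (4 * m - (A + B)) ≥ 0 :=
        mul_nonneg hp0 (by linarith)
      nlinarith [sq_nonneg ((u + 1 - v) / 2 - t), huA, hvB, key1, key2]
  · rw [hval, hm, ha]
end
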